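/- Let X be a connected, locally finite simple graph with vertex set V and graph distance d, let ℓ : ℤ → V be a bi-infinite geodesic, and let m ∈ ℕ be such that for every x ∈ V there exists i ∈ ℤ with d(x, ℓ(i)) ≤ m. If A ⊆ V is infinite and its boundary ∂A is finite, then A contains at least one end of ℓ: either there exists N with ℓ(i) ∈ A for all i ≥ N, or there exists N with ℓ(i) ∈ A for all i ≤ −N. -/

import Mathlib

/-- Balls are finite in a connected locally finite graph. -/
lemma ball_finite' {V : Type*} (X : SimpleGraph V) (hconn : X.Connected)
    (hlf : ∀ v : V, (X.neighborSet v).Finite) (v : V) :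
    ∀ R : ℕ, {x : V | X.dist x v ≤ R}.Finite := by
  intro R
  induction R with
  | zero =>
    apply Set.Finite.subset (Set.finite_singleton v)
    intro x hx
    simp only [Set.mem_setOf_eq, Nat.le_zero] at hx
    simp [(hconn.dist_eq_zero_iff).mp hx]
  | succ R ih =>
    apply Set.Finite.subset (ih.union (Set.Finite.biUnion ih (fun y _ => hlf y)))
    intro x hx
    simp only [Set.mem_setOf_eq] at hx
    rcases Nat.lt_or_ge (X.dist x v) (R + 1) with h | h
    · exact Or.inl (Nat.lt_succ_iff.mp h)
    · have hd : X.dist x v = R + 1 := le_antisymm hx h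
      obtain ⟨w, hw⟩ := (hconn x v).exists_walk_length_eq_dist
      rw [hd] at hw
      cases w with
      | nil => simp at hw
      | cons hadj w' =>
        right
        rename_i y
        refine Set.mem_biUnion (x := y) ?_ hadj.symm
        have : X.dist y v ≤ w'.length := SimpleGraph.dist_le w'
        simp only [SimpleGraph.Walk.length_cons, Nat.succ_inj] at hw
        simpa [Set.mem_setOf_eq, hw] using this

/-- If a walk goes from inside `A` to outside `A`, it meets the boundary within its length. -/
lemma cross_boundary' {V : Type*} (X : SimpleGraph V) (hconn : X.Connected) (A : Set V) :
    ∀ {x y : V} (w : X.Walk x y), x ∈ A → y ∉ A →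
      ∃ p, (p ∈ A ∧ ∃ q, q ∉ A ∧ X.Adj p q) ∧ X.dist x p ≤ w.length := by
  intro x y w
  induction w with
  | nil => intro hx hy; exact absurd hx hy
  | cons hadj w' ih =>
    rename_i a b c
    intro hx hy
    by_cases hb : b ∈ A
    · obtain ⟨p, hp, hd⟩ := ih hb hy
      refine ⟨p, hp, ?_⟩
      calc X.dist a p ≤ X.dist a b + X.dist b p := hconn.dist_triangle
        _ ≤ 1 + w'.length := by
            gcongr
            exact SimpleGraph.dist_le hadj.toWalk
        _ = (SimpleGraph.Walk.cons hadj w').length := by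
            simp [SimpleGraph.Walk.length_cons, Nat.add_comm]
    · exact ⟨a, ⟨hx, b, hb, hadj⟩, by simp [SimpleGraph.dist_self]⟩

/-- In a connected, locally finite simple graph with a bi-infinite geodesic
`ℓ` such that every vertex is within distance `m` of `ℓ`, every infinite set `A` with
finite boundary contains at least one end of `ℓ`. -/
theorem infinite_set_contains_an_end {V : Type*} (X : SimpleGraph V)
    (hconn : X.Connected) (hlf : ∀ v : V, (X.neighborSet v).Finite)
    (ℓ : ℤ → V) (hgeo : ∀ i j : ℤ, (X.dist (ℓ i) (ℓ j) : ℤ) = |i - j|)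
    (m : ℕ) (hm : ∀ x : V, ∃ i : ℤ, X.dist x (ℓ i) ≤ m)
    (A : Set V) (hA : A.Infinite)
    (hbd : {x ∈ A | ∃ y ∉ A, X.Adj x y}.Finite) :
    (∃ N : ℤ, ∀ i ≥ N, ℓ i ∈ A) ∨ (∃ N : ℤ, ∀ i ≤ -N, ℓ i ∈ A) := by
  set S := {x ∈ A | ∃ y ∉ A, X.Adj x y} with hS
  -- bound on the boundary
  obtain ⟨K, hK⟩ : ∃ K : ℕ, ∀ p ∈ S, X.dist p (ℓ 0) ≤ K := by
    obtain ⟨K, hK⟩ := (hbd.image (fun p => X.dist p (ℓ 0))).bddAbove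
    exact ⟨K, fun p hp => hK (Set.mem_image_of_mem _ hp)⟩
  -- distance of ℓ i to ℓ 0
  have hdist0 : ∀ i : ℤ, (X.dist (ℓ i) (ℓ 0) : ℤ) = |i| := by
    intro i; simpa using hgeo i 0
  -- ℓ i ∉ S for |i| > K
  have hnotS : ∀ i : ℤ, ((K : ℤ) < i ∨ i < -(K : ℤ)) → ℓ i ∉ S := by
    intro i hi hmem
    have h1 := hK _ hmem
    have h2 : (X.dist (ℓ i) (ℓ 0) : ℤ) ≤ (K : ℤ) := by exact_mod_cast h1
    rw [hdist0 i] at h2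
    have h3 := le_abs_self i
    have h4 := neg_abs_le i
    omega
  -- consecutive vertices of ℓ are adjacent
  have hadj : ∀ i : ℤ, X.Adj (ℓ i) (ℓ (i + 1)) := by
    intro i
    rw [← SimpleGraph.dist_eq_one_iff_adj]
    have h := hgeo i (i + 1)
    rw [show i - (i + 1) = -1 by ring] at h
    simp only [abs_neg, abs_one] at h
    exact_mod_cast h
  set N : ℤ := (K : ℤ) + 1 with hN
  -- tail constancy, positive side
  have hpostail : ∀ (P : Set V), (∀ i : ℤ, N ≤ i → (ℓ i ∈ P ∧ ℓ (i+1) ∉ P) → ℓ i ∈ S) →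
      ℓ N ∈ P → ∀ i ≥ N, ℓ i ∈ P := by
    intro P hP h0 i hi
    refine Int.le_induction (motive := fun k _ => ℓ k ∈ P) h0 (fun j hj ihj => ?_) i hi
    by_contra hc
    exact hnotS j (Or.inl (by omega)) (hP j hj ⟨ihj, hc⟩)
  have hnegtail : ∀ (P : Set V), (∀ i : ℤ, i ≤ -N → (ℓ i ∈ P ∧ ℓ (i-1) ∉ P) → ℓ i ∈ S) →
      ℓ (-N) ∈ P → ∀ i ≤ -N, ℓ i ∈ P := by
    intro P hP h0 i hi
    refine Int.le_induction_down (motive := fun k _ => ℓ k ∈ P) h0 (fun j hj ihj => ?_) i hi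
    by_contra hc
    exact hnotS j (Or.inr (by omega)) (hP j hj ⟨ihj, hc⟩)
  by_cases hp : ℓ N ∈ A
  · left
    exact ⟨N, hpostail A (fun i hi ⟨h1, h2⟩ => ⟨h1, ℓ (i+1), h2, hadj i⟩) hp⟩
  by_cases hq : ℓ (-N) ∈ A
  · right
    refine ⟨N, hnegtail A (fun i hi ⟨h1, h2⟩ => ⟨h1, ℓ (i-1), h2, ?_⟩) hq⟩
    have := hadj (i - 1); simpa using this.symm
  -- both tails outside A; derive contradiction
  exfalso
  have hpout : ∀ i ≥ N, ℓ i ∉ A := by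
    refine hpostail Aᶜ (fun i hi ⟨h1, h2⟩ => ?_) hp
    have hmem : ℓ (i+1) ∈ S := ⟨not_not.mp h2, ℓ i, h1, (hadj i).symm⟩
    exact absurd hmem (hnotS (i+1) (Or.inl (by omega)))
  have hnout : ∀ i ≤ -N, ℓ i ∉ A := by
    refine hnegtail Aᶜ (fun i hi ⟨h1, h2⟩ => ?_) hq
    have hmem : ℓ (i-1) ∈ S := ⟨not_not.mp h2, ℓ i, h1, by simpa using hadj (i-1)⟩
    exact absurd hmem (hnotS (i-1) (Or.inr (by omega)))
  -- pick a far-away point of A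
  obtain ⟨x, hxA, hxfar⟩ : ∃ x ∈ A, ¬ X.dist x (ℓ 0) ≤ m + 2 * K + 1 := by
    have hfin := hA.diff (ball_finite' X hconn hlf (ℓ 0) (m + 2 * K + 1))
    obtain ⟨x, hx⟩ := hfin.nonempty
    exact ⟨x, hx.1, hx.2⟩
  push_neg at hxfar
  obtain ⟨i, hi⟩ := hm x
  -- |i| is large
  have hi_large : (K : ℤ) + 1 ≤ |i| := by
    have htri : X.dist x (ℓ 0) ≤ X.dist x (ℓ i) + X.dist (ℓ i) (ℓ 0) :=
      hconn.dist_triangle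
    have h0 := hdist0 i
    have hcast : (X.dist x (ℓ 0) : ℤ) ≤ (m : ℤ) + |i| := by
      push_cast at htri ⊢; omega
    have hfar' : ((m : ℤ) + 2 * K + 1) < (X.dist x (ℓ 0) : ℤ) := by exact_mod_cast hxfar
    omega
  have hℓi : ℓ i ∉ A := by
    rcases abs_cases i with ⟨he, _⟩ | ⟨he, _⟩ <;>
    rcases le_or_gt N i with h | h
    · exact hpout i h
    · exact absurd hi_large (by omega)
    · exact hpout i h
    · exact hnout i (by omega)
  -- cross the boundary
  obtain ⟨w, hw⟩ := (hconn x (ℓ i)).exists_walk_length_eq_dist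
  obtain ⟨p, hpS, hpd⟩ := cross_boundary' X hconn A w hxA hℓi
  have h1 : X.dist x p ≤ m := by omega
  have h2 : X.dist p (ℓ 0) ≤ K := hK p hpS
  have h3 : X.dist x (ℓ 0) ≤ X.dist x p + X.dist p (ℓ 0) := hconn.dist_triangle
  omega
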